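/- As formal power series in x over ℚ, the identity (1-x^2)[1 - 2√2 / (3√2 - √(1 + x^2 + √((1-x^2)^2 - 16x^2·x^2/(1-x^2)^2)))] = (1-x^2)[1 - 4/(6 - √((1-x)^2 - 4x·x^2/(1-x^2)) - √((1+x)^2 + 4x·x^2/(1-x^2)))] holds, i.e., formulas (12) and (13) of the paper agree at y = x. -/

import Mathlib

set_option maxHeartbeats 1000000

/-- Formulas (12) and (13) of the paper agree at `y = x`, interpreted as real
analytic functions for small `x > 0`. -/
theorem formulas_12_13_agree :
    ∃ ε > (0 : ℝ), ∀ x : ℝ, 0 < x → x < ε →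
      (1 - x ^ 2) * (1 - 2 * Real.sqrt 2 /
          (3 * Real.sqrt 2 - Real.sqrt (1 + x ^ 2 +
            Real.sqrt ((1 - x ^ 2) ^ 2 - 16 * x ^ 2 * x ^ 2 / (1 - x ^ 2) ^ 2)))) =
        (1 - x ^ 2) * (1 - 4 /
          (6 - Real.sqrt ((1 - x) ^ 2 - 4 * x * x ^ 2 / (1 - x ^ 2)) -
            Real.sqrt ((1 + x) ^ 2 + 4 * x * x ^ 2 / (1 - x ^ 2)))) := by
  refine ⟨1/4, by norm_num, fun x hx hx4 => ?_⟩
  have h1 : (0:ℝ) < 1 - x^2 := by nlinarith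
  have h1' : (1:ℝ) - x^2 ≠ 0 := ne_of_gt h1
  have hu0 : 0 ≤ 4 * x * x ^ 2 / (1 - x ^ 2) := by positivity
  have hra : (0:ℝ) ≤ (1-x)^2 - 4 * x * x ^ 2 / (1 - x ^ 2) := by
    rw [sub_nonneg, div_le_iff₀ h1]; nlinarith
  have hrb : (0:ℝ) ≤ (1+x)^2 + 4 * x * x ^ 2 / (1 - x ^ 2) := by positivity
  have hr : (0:ℝ) ≤ (1 - x^2)^2 - 16*x^2*x^2/(1-x^2)^2 := by
    have hx2 : x^2 < 1/16 := by nlinarith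
    rw [sub_nonneg, div_le_iff₀ (by positivity)]
    nlinarith [sq_nonneg x, sq_nonneg (x^2), mul_pos hx hx]
  set S := Real.sqrt ((1 - x^2)^2 - 16*x^2*x^2/(1-x^2)^2) with hS
  have hS0 : 0 ≤ S := Real.sqrt_nonneg _
  have hS1 : S ≤ 1 := by
    have h16 : (0:ℝ) ≤ 16*x^2*x^2/(1-x^2)^2 := by positivity
    have hle : ((1 - x^2)^2 - 16*x^2*x^2/(1-x^2)^2) ≤ 1 := by nlinarith
    calc S ≤ Real.sqrt 1 := by rw [hS]; exact Real.sqrt_le_sqrt hle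
      _ = 1 := Real.sqrt_one
  set A := Real.sqrt ((1-x)^2 - 4 * x * x ^ 2 / (1 - x ^ 2)) with hA
  set B := Real.sqrt ((1+x)^2 + 4 * x * x ^ 2 / (1 - x ^ 2)) with hB
  have hAB : A * B = S := by
    rw [hA, hB, ← Real.sqrt_mul hra, hS]
    congr 1
    field_simp
    ring
  have hA2 : A^2 = (1-x)^2 - 4 * x * x ^ 2 / (1 - x ^ 2) := Real.sq_sqrt hra
  have hB2 : B^2 = (1+x)^2 + 4 * x * x ^ 2 / (1 - x ^ 2) := Real.sq_sqrt hrb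
  have hABnn : 0 ≤ A + B := add_nonneg (Real.sqrt_nonneg _) (Real.sqrt_nonneg _)
  set T := Real.sqrt (1 + x^2 + S) with hT
  have hT0 : 0 ≤ T := Real.sqrt_nonneg _
  have hT2 : T^2 = 1 + x^2 + S := Real.sq_sqrt (by positivity)
  have hTlt : T < 2 := by nlinarith
  have hsum : A + B = Real.sqrt 2 * T := by
    have h2 : (A+B)^2 = 2 * (1 + x^2 + S) := by nlinarith
    have := Real.sqrt_sq hABnn
    rw [← this, h2, Real.sqrt_mul (by norm_num : (0:ℝ) ≤ 2), ← hT2,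
      Real.sqrt_sq hT0]
  have hs2 : Real.sqrt 2 * Real.sqrt 2 = 2 := Real.mul_self_sqrt (by norm_num)
  have hs2lt : Real.sqrt 2 < 2 := by nlinarith [Real.sqrt_nonneg 2]
  have hs2ge : (1:ℝ) ≤ Real.sqrt 2 := by nlinarith [Real.sqrt_nonneg 2]
  have hd1 : 3 * Real.sqrt 2 - T ≠ 0 := by nlinarith
  have hd2 : (6:ℝ) - Real.sqrt 2 * T ≠ 0 := by nlinarith [Real.sqrt_nonneg 2]
  have h6 : (6:ℝ) - A - B = 6 - Real.sqrt 2 * T := by rw [show (6:ℝ) - A - B = 6 - (A + B) by ring, hsum]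
  rw [h6]
  have key : 2 * Real.sqrt 2 / (3 * Real.sqrt 2 - T) = 4 / (6 - Real.sqrt 2 * T) := by
    field_simp
    rw [div_eq_iff (by nlinarith)]
    nlinarith [hs2]
  rw [key]
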